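/- arXiv:math/0604141 — 3 statements merged into one kernel-verified Lean document; each statement's English description precedes it below -/
import Mathlib

section
/- For 0 < ε < 1/3, one has (4ε² + 2(1-ε)²)/(4ε² + (1-ε)²) > (4ε² + 5(1-ε)²)/(4ε² + 3(1-ε)²); i.e., the expected root degree of the conditioned Galton–Watson tree with 3 vertices strictly exceeds that with 4 vertices. -/
/-- For 0 < ε < 1/3, the expected root degree of the conditioned Galton–Watson tree with
3 vertices strictly exceeds that with 4 vertices:
(4ε²+2(1-ε)²)/(4ε²+(1-ε)²) > (4ε²+5(1-ε)²)/(4ε²+3(1-ε)²). -/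
theorem expected_W1_T3_gt_T4 (ε : ℝ) (hε0 : 0 < ε) (hε1 : ε < 1 / 3) :
    (4 * ε ^ 2 + 2 * (1 - ε) ^ 2) / (4 * ε ^ 2 + (1 - ε) ^ 2) >
      (4 * ε ^ 2 + 5 * (1 - ε) ^ 2) / (4 * ε ^ 2 + 3 * (1 - ε) ^ 2) := by
  have h1 : (0:ℝ) < 4 * ε ^ 2 + (1 - ε) ^ 2 := by nlinarith
  have h2 : (0:ℝ) < 4 * ε ^ 2 + 3 * (1 - ε) ^ 2 := by nlinarith
  rw [gt_iff_lt, div_lt_div_iff₀ h2 h1]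
  nlinarith [mul_pos (mul_pos (show (0:ℝ) < 1 - 3*ε by linarith) (show (0:ℝ) < 1 + ε by linarith)) (sq_nonneg (1 - ε) |>.lt_of_ne (by nlinarith))]
end

section
/- For 0 < ε < 1/5, one has (4ε² + 2(1-ε)²)/(4ε² + (1-ε)²) > 2 - ε; i.e., the expected root degree E[W₁(T₃)] of the conditioned Galton–Watson tree with 3 vertices exceeds 1 + σ² = 2 - ε, where σ² = Var(ξ) = 1 - ε. -/
/-- For 0 < ε < 1/5 the expected root degree of the conditioned Galton–Watson tree with
3 vertices exceeds 1 + σ² = 2 - ε: (4ε²+2(1-ε)²)/(4ε²+(1-ε)²) > 2 - ε. -/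
theorem expected_W1_T3_gt_limit (ε : ℝ) (hε0 : 0 < ε) (hε1 : ε < 1 / 5) :
    (4 * ε ^ 2 + 2 * (1 - ε) ^ 2) / (4 * ε ^ 2 + (1 - ε) ^ 2) > 2 - ε := by
  have hd : 0 < 4 * ε ^ 2 + (1 - ε) ^ 2 := by nlinarith
  rw [gt_iff_lt, lt_div_iff₀ hd]
  have h1 : 0 < 1 - 5 * ε := by linarith
  have h2 : 0 < 1 - ε := by linarith
  nlinarith [mul_pos (mul_pos hε0 h1) h2]
end

section
/- If there exists, for each n, a coupling of T_n and T_∞ with T_n ⊆ T_∞ almost surely, then E[W_k(T_n)] ≤ E[W_k(T_∞)] for all k, n; hence for the offspring distribution p₀=p₂=(1-ε)/2, p₁=ε with 0<ε<1/5, no such coupling exists for n=3. -/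
open MeasureTheory

/-- A rooted tree, encoded as a nonempty prefix-closed set of positions:
a vertex is the list of child-indices on the path from the root to it.
Infinite trees such as the size-biased limit tree T_∞ are allowed. -/
def IsRootedTree (A : Set (List ℕ)) : Prop :=
  [] ∈ A ∧ ∀ l ∈ A, ∀ pre : List ℕ, pre <+: l → pre ∈ A

/-- `levelCount A k` is the number of vertices of `A` at distance `k` from the root. -/
noncomputable def levelCount (A : Set (List ℕ)) (k : ℕ) : ℕ :=
  {l ∈ A | l.length = k}.ncard

lemma levelCount_mono {A B : Set (List ℕ)} (h : A ⊆ B) (k : ℕ)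
    (hB : {l ∈ B | l.length = k}.Finite) :
    levelCount A k ≤ levelCount B k := by
  apply Set.ncard_le_ncard _ hB
  exact fun l hl => ⟨h hl.1, hl.2⟩

/-- (a) A coupling of T_n and T_∞ with T_n ⊆ T_∞ a.s. forces
E[W_k(T_n)] ≤ E[W_k(T_∞)] for all k; (b) hence, for the offspring distribution
p₀ = p₂ = (1-ε)/2, p₁ = ε with 0 < ε < 1/5, since
E[W₁(T₃)] = (4ε²+2(1-ε)²)/(4ε²+(1-ε)²) > 2-ε = 1+σ² = E[W₁(T_∞)],
no such coupling exists for n = 3 (no coupling can satisfy T₃ ⊆ T_∞ a.s.). -/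
theorem no_coupling_with_limit_tree :
    (∀ {Ω : Type} [MeasurableSpace Ω] (μ : Measure Ω) [IsProbabilityMeasure μ]
        (S T : Ω → Set (List ℕ)),
      (∀ᵐ ω ∂μ, IsRootedTree (S ω)) → (∀ᵐ ω ∂μ, IsRootedTree (T ω)) →
      (∀ᵐ ω ∂μ, ∀ k, {l ∈ T ω | l.length = k}.Finite) →
      (∀ᵐ ω ∂μ, S ω ⊆ T ω) →
      ∀ k : ℕ, ∫⁻ ω, (levelCount (S ω) k : ENNReal) ∂μ ≤
        ∫⁻ ω, (levelCount (T ω) k : ENNReal) ∂μ) ∧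
    (∀ (ε : ℝ), 0 < ε → ε < 1 / 5 →
      ∀ (Ω : Type) (_ : MeasurableSpace Ω) (μ : Measure Ω) (_ : IsProbabilityMeasure μ)
        (S T : Ω → Set (List ℕ)),
      (∀ᵐ ω ∂μ, IsRootedTree (S ω)) → (∀ᵐ ω ∂μ, IsRootedTree (T ω)) →
      (∀ᵐ ω ∂μ, ∀ k, {l ∈ T ω | l.length = k}.Finite) →
      -- S is distributed as T₃: E[W₁(T₃)] = (4ε²+2(1-ε)²)/(4ε²+(1-ε)²)
      (∫⁻ ω, (levelCount (S ω) 1 : ENNReal) ∂μ =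
        ENNReal.ofReal ((4 * ε ^ 2 + 2 * (1 - ε) ^ 2) / (4 * ε ^ 2 + (1 - ε) ^ 2))) →
      -- T is distributed as T_∞: E[W₁(T_∞)] = 1 + σ² = 2 - ε
      (∫⁻ ω, (levelCount (T ω) 1 : ENNReal) ∂μ = ENNReal.ofReal (2 - ε)) →
      ¬ (∀ᵐ ω ∂μ, S ω ⊆ T ω)) := by
  constructor
  · intro Ω _ μ _ S T _ _ hfin hsub k
    apply lintegral_mono_ae
    filter_upwards [hfin, hsub] with ω hf hs
    exact_mod_cast Nat.cast_le.mpr (levelCount_mono hs k (hf k))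
  · intro ε hε hε5 Ω m μ hp S T hS hT hfin hES hET hsub
    have key : ∫⁻ ω, (levelCount (S ω) 1 : ENNReal) ∂μ ≤
        ∫⁻ ω, (levelCount (T ω) 1 : ENNReal) ∂μ := by
      apply lintegral_mono_ae
      filter_upwards [hfin, hsub] with ω hf hs
      exact_mod_cast Nat.cast_le.mpr (levelCount_mono hs 1 (hf 1))
    rw [hES, hET] at key
    have h2 : (0:ℝ) ≤ 2 - ε := by linarith
    have hle : (4 * ε ^ 2 + 2 * (1 - ε) ^ 2) / (4 * ε ^ 2 + (1 - ε) ^ 2) ≤ 2 - ε :=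
      (ENNReal.ofReal_le_ofReal_iff h2).mp key
    have hd : (0:ℝ) < 4 * ε ^ 2 + (1 - ε) ^ 2 := by nlinarith
    rw [div_le_iff₀ hd] at hle
    nlinarith [mul_pos (mul_pos hε (by linarith : (0:ℝ) < 1 - 5*ε)) (by linarith : (0:ℝ) < 1 - ε)]
end
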